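/- Quantum Lovász local lemma for bounded-degree k-QSAT: Let H_φ = Σ_{m=1}^M Π_m be a k-QSAT Hamiltonian on N qubits in which every qubit appears in at most 2^k/(e·k) clauses (e being Euler's constant). Then for every choice of the clause vectors φ_1, …, φ_M, the Hamiltonian has a nontrivial zero-energy subspace: dim ker H_φ ≥ 1. -/

import Mathlib

open scoped BigOperators

noncomputable section

/-- The matrix of the rank-one projector `|φ⟩⟨φ|` acting on the qubits in the
`k`-element set `S` and as the identity on the remaining qubits. -/
def clauseProj {N : ℕ} (S : Finset (Fin N)) (φ : ({i // i ∈ S} → Fin 2) → ℂ) :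
    Matrix (Fin N → Fin 2) (Fin N → Fin 2) ℂ :=
  fun σ τ =>
    (if ∀ i : Fin N, i ∉ S → σ i = τ i then (1 : ℂ) else 0) *
      φ (fun i => σ i.1) * (starRingEnd ℂ) (φ (fun i => τ i.1))

/-- The `k`-QSAT Hamiltonian `H_φ = ∑ m, Π_m` associated to the interaction
hypergraph `S : Fin M → Finset (Fin N)` and the clause vectors `φ m`. -/
def qsatHam {N M : ℕ} (S : Fin M → Finset (Fin N))
    (φ : ∀ m, ({i // i ∈ S m} → Fin 2) → ℂ) :
    Matrix (Fin N → Fin 2) (Fin N → Fin 2) ℂ :=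
  ∑ m, clauseProj (S m) (φ m)

/-- `φ` is a unit vector. -/
def IsUnitVec {α : Type*} [Fintype α] (φ : α → ℂ) : Prop :=
  ∑ x, Complex.normSq (φ x) = 1

/-- The dimension of the zero-energy eigenspace `ker H_φ`. -/
def kerDim {N M : ℕ} (S : Fin M → Finset (Fin N))
    (φ : ∀ m, ({i // i ∈ S m} → Fin 2) → ℂ) : ℕ :=
  Module.finrank ℂ (LinearMap.ker (Matrix.mulVecLin (qsatHam S φ)))

variable {N : ℕ}

-- placeholders from earlier development
def ovr (S : Finset (Fin N)) (σ : Fin N → Fin 2) (t : {i // i ∈ S} → Fin 2) : Fin N → Fin 2 :=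
  fun i => if h : i ∈ S then t ⟨i, h⟩ else σ i
def res (S : Finset (Fin N)) (σ : Fin N → Fin 2) : {i // i ∈ S} → Fin 2 :=
  fun i => σ i.1
@[simp] lemma res_ovr (S : Finset (Fin N)) (σ : Fin N → Fin 2) (t : {i // i ∈ S} → Fin 2) :
    res S (ovr S σ t) = t := by
  funext i; simp [res, ovr, i.2]
@[simp] lemma ovr_ovr (S : Finset (Fin N)) (σ : Fin N → Fin 2) (t t' : {i // i ∈ S} → Fin 2) :
    ovr S (ovr S σ t) t' = ovr S σ t' := by
  funext i; simp only [ovr]; split <;> rfl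
@[simp] lemma ovr_res (S : Finset (Fin N)) (σ : Fin N → Fin 2) :
    ovr S σ (res S σ) = σ := by
  funext i; simp only [ovr, res]; split <;> rfl
def Eop (S : Finset (Fin N)) (s t : {i // i ∈ S} → Fin 2) :
    ((Fin N → Fin 2) → ℂ) →ₗ[ℂ] ((Fin N → Fin 2) → ℂ) where
  toFun x := fun σ => if res S σ = s then x (ovr S σ t) else 0
  map_add' x y := by funext σ; by_cases h : res S σ = s <;> simp [h]
  map_smul' c x := by funext σ; by_cases h : res S σ = s <;> simp [h]
lemma Eop_apply (S : Finset (Fin N)) (s t : {i // i ∈ S} → Fin 2) (x : (Fin N → Fin 2) → ℂ)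
    (σ : Fin N → Fin 2) : Eop S s t x σ = if res S σ = s then x (ovr S σ t) else 0 := rfl
lemma Eop_comp (S : Finset (Fin N)) (s t u v : {i // i ∈ S} → Fin 2) (x : (Fin N → Fin 2) → ℂ) :
    Eop S s t (Eop S u v x) = if t = u then Eop S s v x else 0 := by
  funext σ
  by_cases h : res S σ = s <;> by_cases h2 : t = u <;>
    simp [Eop_apply, h, h2]
lemma sum_Eop_diag (S : Finset (Fin N)) (x : (Fin N → Fin 2) → ℂ) :
    ∑ s : {i // i ∈ S} → Fin 2, Eop S s s x = x := by
  funext σ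
  rw [Finset.sum_apply]
  rw [Finset.sum_eq_single (res S σ)]
  · simp [Eop_apply]
  · intro b _ hb; simp [Eop_apply, Ne.symm hb]
  · simp
def Pop (S : Finset (Fin N)) (φ : ({i // i ∈ S} → Fin 2) → ℂ) :
    ((Fin N → Fin 2) → ℂ) →ₗ[ℂ] ((Fin N → Fin 2) → ℂ) :=
  ∑ s : {i // i ∈ S} → Fin 2, ∑ t : {i // i ∈ S} → Fin 2,
    (φ s * (starRingEnd ℂ) (φ t)) • Eop S s t

-- NEW MATERIAL ------------------------------------------------------------

/-- commutation of override on disjoint sets -/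
lemma ovr_comm {S₁ S₂ : Finset (Fin N)} (h : Disjoint S₁ S₂) (σ : Fin N → Fin 2)
    (t : {i // i ∈ S₁} → Fin 2) (u : {i // i ∈ S₂} → Fin 2) :
    ovr S₁ (ovr S₂ σ u) t = ovr S₂ (ovr S₁ σ t) u := by
  funext i
  by_cases h1 : i ∈ S₁
  · have h2 : i ∉ S₂ := fun h2 => (Finset.disjoint_left.mp h h1) h2
    simp [ovr, h1, h2]
  · by_cases h2 : i ∈ S₂ <;> simp [ovr, h1, h2]

lemma res_ovr_disj {S₁ S₂ : Finset (Fin N)} (h : Disjoint S₁ S₂) (σ : Fin N → Fin 2)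
    (u : {i // i ∈ S₂} → Fin 2) : res S₁ (ovr S₂ σ u) = res S₁ σ := by
  funext i
  have h2 : i.1 ∉ S₂ := fun h2 => (Finset.disjoint_left.mp h i.2) h2
  simp [res, ovr, h2]

lemma Pop_apply' (S : Finset (Fin N)) (φ : ({i // i ∈ S} → Fin 2) → ℂ)
    (x : (Fin N → Fin 2) → ℂ) (σ : Fin N → Fin 2) :
    Pop S φ x σ = φ (res S σ) * ∑ t : {i // i ∈ S} → Fin 2,
      (starRingEnd ℂ) (φ t) * x (ovr S σ t) := by
  simp only [Pop, LinearMap.sum_apply, Finset.sum_apply, LinearMap.smul_apply, Pi.smul_apply,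
    Eop_apply, smul_eq_mul, mul_ite, mul_zero, Finset.mul_sum]
  rw [Finset.sum_comm]
  congr 1; funext t
  rw [Finset.sum_eq_single (res S σ)]
  · simp [mul_assoc]
  · intro b _ hb; simp [Ne.symm hb]
  · simp

/-- Pop on S₂ commutes with Eop on a disjoint S₁ -/
lemma Pop_comm_Eop {S₁ S₂ : Finset (Fin N)} (h : Disjoint S₁ S₂)
    (φ : ({i // i ∈ S₂} → Fin 2) → ℂ) (s t : {i // i ∈ S₁} → Fin 2)
    (x : (Fin N → Fin 2) → ℂ) :
    Pop S₂ φ (Eop S₁ s t x) = Eop S₁ s t (Pop S₂ φ x) := by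
  funext σ
  rw [Pop_apply', Eop_apply]
  by_cases hs : res S₁ σ = s
  · rw [if_pos hs, Pop_apply']
    rw [res_ovr_disj h.symm]
    congr 1
    refine Finset.sum_congr rfl ?_
    intro u _
    rw [Eop_apply, res_ovr_disj h, if_pos hs, ovr_comm h]
  · rw [if_neg hs]
    have : ∀ u : {i // i ∈ S₂} → Fin 2,
        (starRingEnd ℂ) (φ u) * (Eop S₁ s t x) (ovr S₂ σ u) = 0 := by
      intro u
      rw [Eop_apply, res_ovr_disj h, if_neg hs, mul_zero]
    rw [Finset.sum_congr rfl (fun u _ => this u), Finset.sum_const_zero, mul_zero]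

lemma ker_Pop_invariant {S₁ S₂ : Finset (Fin N)} (h : Disjoint S₁ S₂)
    (φ : ({i // i ∈ S₂} → Fin 2) → ℂ) (s t : {i // i ∈ S₁} → Fin 2)
    (x : (Fin N → Fin 2) → ℂ) (hx : x ∈ LinearMap.ker (Pop S₂ φ)) :
    Eop S₁ s t x ∈ LinearMap.ker (Pop S₂ φ) := by
  rw [LinearMap.mem_ker] at hx ⊢
  rw [Pop_comm_Eop h, hx, map_zero]

/-- Key tensor lemma: if V is invariant under all local matrix units on S₀,
then `dim V = |B| ⬝ r` and cutting with `ker (Pop S₀ φ)` loses at most `r`. -/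
lemma tensor_dim_lemma (S₀ : Finset (Fin N)) (φ : ({i // i ∈ S₀} → Fin 2) → ℂ)
    (V : Submodule ℂ ((Fin N → Fin 2) → ℂ))
    (hinv : ∀ s t : {i // i ∈ S₀} → Fin 2, ∀ v ∈ V, Eop S₀ s t v ∈ V) :
    ∃ r : ℕ, Module.finrank ℂ V = Fintype.card ({i // i ∈ S₀} → Fin 2) * r ∧
      Module.finrank ℂ V ≤
        Module.finrank ℂ ↥(V ⊓ LinearMap.ker (Pop S₀ φ)) + r := by
  classical
  set s₀ : ({i // i ∈ S₀} → Fin 2) := fun _ => 0 with hs₀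
  set V₀ : Submodule ℂ ((Fin N → Fin 2) → ℂ) := Submodule.map (Eop S₀ s₀ s₀) V with hV₀
  have hmemV₀ : ∀ (s : ({i // i ∈ S₀} → Fin 2)) (v : (Fin N → Fin 2) → ℂ), v ∈ V → Eop S₀ s₀ s v ∈ V₀ := by
    intro s v hv
    have h1 : Eop S₀ s₀ s v ∈ V := hinv _ _ v hv
    have h2 : Eop S₀ s₀ s₀ (Eop S₀ s₀ s v) = Eop S₀ s₀ s v := by
      rw [Eop_comp]; simp
    exact ⟨Eop S₀ s₀ s v, h1, h2⟩
  have hV₀leV : V₀ ≤ V := by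
    rintro x ⟨y, hy, rfl⟩
    exact hinv _ _ y hy
  -- the equivalence V ≃ (({i // i ∈ S₀} → Fin 2) → V₀)
  set Φ : V →ₗ[ℂ] (({i // i ∈ S₀} → Fin 2) → V₀) := LinearMap.pi
    (fun s => LinearMap.codRestrict V₀ ((Eop S₀ s₀ s).domRestrict V)
      (fun v => hmemV₀ s v.1 v.2)) with hΦ
  set Ψ' : (({i // i ∈ S₀} → Fin 2) → V₀) →ₗ[ℂ] ((Fin N → Fin 2) → ℂ) :=
    ∑ s : ({i // i ∈ S₀} → Fin 2), (Eop S₀ s s₀).comp ((Submodule.subtype V₀).comp (LinearMap.proj s)) with hΨ'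
  have hΨ'apply : ∀ f : ({i // i ∈ S₀} → Fin 2) → V₀, Ψ' f = ∑ s : ({i // i ∈ S₀} → Fin 2), Eop S₀ s s₀ (f s).1 := by
    intro f; simp [hΨ', LinearMap.sum_apply]
  have hΨ'mem : ∀ f : ({i // i ∈ S₀} → Fin 2) → V₀, Ψ' f ∈ V := by
    intro f
    rw [hΨ'apply]
    exact Submodule.sum_mem V (fun s _ => hinv _ _ _ (hV₀leV (f s).2))
  set Ψ : (({i // i ∈ S₀} → Fin 2) → V₀) →ₗ[ℂ] V := LinearMap.codRestrict V Ψ' hΨ'mem with hΨdef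
  have hΨΦ : ∀ v : V, Ψ (Φ v) = v := by
    intro v
    apply Subtype.ext
    have : (Ψ (Φ v) : (Fin N → Fin 2) → ℂ) = Ψ' (Φ v) := rfl
    rw [this, hΨ'apply]
    have : ∀ s : ({i // i ∈ S₀} → Fin 2), ((Φ v s : V₀) : (Fin N → Fin 2) → ℂ) = Eop S₀ s₀ s v.1 := fun s => rfl
    calc ∑ s : ({i // i ∈ S₀} → Fin 2), Eop S₀ s s₀ ((Φ v s : V₀) : (Fin N → Fin 2) → ℂ)
        = ∑ s : ({i // i ∈ S₀} → Fin 2), Eop S₀ s s v.1 := by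
          refine Finset.sum_congr rfl (fun s _ => ?_)
          rw [this s, Eop_comp]; simp
      _ = v.1 := sum_Eop_diag S₀ v.1
  have hΦΨ : ∀ f : ({i // i ∈ S₀} → Fin 2) → V₀, Φ (Ψ f) = f := by
    intro f
    funext s
    apply Subtype.ext
    have h1 : ((Φ (Ψ f) s : V₀) : (Fin N → Fin 2) → ℂ) = Eop S₀ s₀ s (Ψ' f) := rfl
    rw [h1, hΨ'apply, map_sum]
    have h2 : ∀ t : ({i // i ∈ S₀} → Fin 2), Eop S₀ s₀ s (Eop S₀ t s₀ (f t).1)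
        = if s = t then Eop S₀ s₀ s₀ (f t).1 else 0 := by
      intro t; rw [Eop_comp]
    rw [Finset.sum_congr rfl (fun t _ => h2 t), Finset.sum_ite_eq _ s (fun t => Eop S₀ s₀ s₀ (f t).1)]
    simp only [Finset.mem_univ, if_true]
    obtain ⟨y, _, hy⟩ := (f s).2
    rw [← hy, Eop_comp]; simp
  set e : V ≃ₗ[ℂ] (({i // i ∈ S₀} → Fin 2) → V₀) :=
    LinearEquiv.ofLinear Φ Ψ (LinearMap.ext hΦΨ) (LinearMap.ext hΨΦ) with he
  have hrank : Module.finrank ℂ V = Fintype.card ({i // i ∈ S₀} → Fin 2) * Module.finrank ℂ V₀ := by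
    rw [e.finrank_eq, Module.finrank_pi_fintype, Finset.sum_const, smul_eq_mul]
    rfl
  refine ⟨Module.finrank ℂ V₀, hrank, ?_⟩
  -- factor Pop through V₀
  set Aop : ((Fin N → Fin 2) → ℂ) →ₗ[ℂ] ((Fin N → Fin 2) → ℂ) :=
    ∑ s : ({i // i ∈ S₀} → Fin 2), φ s • Eop S₀ s s₀ with hA
  set Bop : ((Fin N → Fin 2) → ℂ) →ₗ[ℂ] ((Fin N → Fin 2) → ℂ) :=
    ∑ t : ({i // i ∈ S₀} → Fin 2), (starRingEnd ℂ) (φ t) • Eop S₀ s₀ t with hB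
  have hfactor : Pop S₀ φ = Aop.comp Bop := by
    apply LinearMap.ext; intro x
    rw [LinearMap.comp_apply]
    simp only [hA, hB, LinearMap.sum_apply, LinearMap.smul_apply, map_sum, map_smul]
    rw [Pop]
    simp only [LinearMap.sum_apply, LinearMap.smul_apply]
    rw [Finset.sum_comm]
    refine Finset.sum_congr rfl (fun t _ => ?_)
    rw [Finset.smul_sum]
    refine Finset.sum_congr rfl (fun u _ => ?_)
    rw [Eop_comp]
    simp [smul_smul, mul_comm]
  have hmapB : Submodule.map Bop V ≤ V₀ := by
    rintro x ⟨y, hy, rfl⟩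
    have : Bop y = ∑ t : ({i // i ∈ S₀} → Fin 2), (starRingEnd ℂ) (φ t) • Eop S₀ s₀ t y := by
      simp [hB, LinearMap.sum_apply]
    rw [this]
    exact Submodule.sum_mem V₀ (fun t _ => Submodule.smul_mem V₀ _ (hmemV₀ t y hy))
  have hmapP : Module.finrank ℂ ↥(Submodule.map (Pop S₀ φ) V) ≤ Module.finrank ℂ V₀ := by
    have h1 : Submodule.map (Pop S₀ φ) V = Submodule.map Aop (Submodule.map Bop V) := by
      rw [hfactor, Submodule.map_comp]
    have h2 : Submodule.map Aop (Submodule.map Bop V) ≤ Submodule.map Aop V₀ :=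
      Submodule.map_mono hmapB
    calc Module.finrank ℂ ↥(Submodule.map (Pop S₀ φ) V)
        ≤ Module.finrank ℂ ↥(Submodule.map Aop V₀) := by
          rw [h1]; exact Submodule.finrank_mono h2
      _ ≤ Module.finrank ℂ V₀ := Submodule.finrank_map_le Aop V₀
  -- rank--nullity
  have hker : Module.finrank ℂ ↥(V ⊓ LinearMap.ker (Pop S₀ φ)) +
      Module.finrank ℂ ↥(Submodule.map (Pop S₀ φ) V) = Module.finrank ℂ V := by
    have h3 := LinearMap.finrank_range_add_finrank_ker ((Pop S₀ φ).domRestrict V)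
    rw [LinearMap.range_domRestrict] at h3
    have h4 : Module.finrank ℂ ↥(LinearMap.ker ((Pop S₀ φ).domRestrict V)) =
        Module.finrank ℂ ↥(V ⊓ LinearMap.ker (Pop S₀ φ)) := by
      have h5 : Submodule.map V.subtype (Submodule.comap V.subtype (LinearMap.ker (Pop S₀ φ)))
          = V ⊓ LinearMap.ker (Pop S₀ φ) := Submodule.map_comap_subtype _ _
      have h6 : LinearMap.ker ((Pop S₀ φ).domRestrict V)
          = Submodule.comap V.subtype (LinearMap.ker (Pop S₀ φ)) := by
        ext v; simp [LinearMap.mem_ker, LinearMap.domRestrict_apply]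
      rw [h6, ← h5]
      exact LinearEquiv.finrank_eq
        (Submodule.equivMapOfInjective V.subtype (Submodule.injective_subtype V) _)
    omega
  calc Module.finrank ℂ ↥V
      = Module.finrank ℂ ↥(V ⊓ LinearMap.ker (Pop S₀ φ)) +
          Module.finrank ℂ ↥(Submodule.map (Pop S₀ φ) V) := hker.symm
    _ ≤ Module.finrank ℂ ↥(V ⊓ LinearMap.ker (Pop S₀ φ)) + Module.finrank ℂ V₀ :=
        Nat.add_le_add_left hmapP _


/-- the numeric heart of the local lemma -/
lemma qlll_numeric (k p : ℕ) (hk2 : 2 ≤ k) (hek : Real.exp 1 * k ≤ 2 ^ k)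
    (hp : (p : ℝ) + 1 ≤ 2 ^ k / Real.exp 1) :
    (1 : ℝ) / 2 ^ k ≤ (Real.exp 1 / 2 ^ k) * (1 - Real.exp 1 / 2 ^ k) ^ p := by
  set x : ℝ := Real.exp 1 / 2 ^ k with hx
  have h2k : (0:ℝ) < 2 ^ k := by positivity
  have he : (0:ℝ) < Real.exp 1 := Real.exp_pos 1
  have hx0 : 0 < x := div_pos he h2k
  have h2e : Real.exp 1 * 2 ≤ 2 ^ k := by
    calc Real.exp 1 * 2 ≤ Real.exp 1 * k := by
          apply mul_le_mul_of_nonneg_left _ he.le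
          exact_mod_cast hk2
      _ ≤ 2 ^ k := hek
  have hxhalf : x ≤ 1 / 2 := by
    rw [hx, div_le_div_iff₀ h2k two_pos]
    linarith
  have h1x : 0 < 1 - x := by linarith
  set t : ℝ := x / (1 - x) with ht
  have ht0 : 0 ≤ t := div_nonneg hx0.le h1x.le
  have hxt : (1 - x) * t = x := by rw [ht]; field_simp
  have hstep : Real.exp (-t) ≤ 1 - x := by
    have h1 : 1 ≤ (1 - x) * Real.exp t := by nlinarith [Real.add_one_le_exp t]
    calc Real.exp (-t) = Real.exp (-t) * 1 := (mul_one _).symm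
      _ ≤ Real.exp (-t) * ((1 - x) * Real.exp t) :=
          mul_le_mul_of_nonneg_left h1 (Real.exp_nonneg _)
      _ = (1 - x) * (Real.exp (-t) * Real.exp t) := by ring
      _ = 1 - x := by rw [← Real.exp_add]; simp
  have hpow : Real.exp (-t) ^ p ≤ (1 - x) ^ p := pow_le_pow_left₀ (Real.exp_nonneg _) hstep p
  have hpx : (p : ℝ) * x ≤ 1 - x := by
    have hinv : (2:ℝ) ^ k / Real.exp 1 = 1 / x := by
      rw [hx, one_div_div]
    rw [hinv] at hp
    have := (mul_le_mul_of_nonneg_right hp hx0.le)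
    rw [one_div, inv_mul_cancel₀ (ne_of_gt hx0)] at this
    linarith
  have hpt : (p : ℝ) * t ≤ 1 := by
    rw [ht, ← mul_div_assoc, div_le_one h1x]
    linarith
  have hexp1 : Real.exp (-1) ≤ (1 - x) ^ p := by
    calc Real.exp (-1) ≤ Real.exp ((p : ℝ) * (-t)) := by
          apply Real.exp_le_exp.mpr; nlinarith
      _ = Real.exp (-t) ^ p := Real.exp_nat_mul (-t) p
      _ ≤ (1 - x) ^ p := hpow
  calc (1:ℝ) / 2 ^ k = x * Real.exp (-1) := by
        rw [Real.exp_neg, hx]; field_simp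
    _ ≤ x * (1 - x) ^ p := mul_le_mul_of_nonneg_left hexp1 hx0.le
    _ = (Real.exp 1 / 2 ^ k) * (1 - Real.exp 1 / 2 ^ k) ^ p := by rw [hx]

section Main
variable {N M k : ℕ}

/-- the joint kernel of the clauses in `T` -/
def kerInf (S : Fin M → Finset (Fin N)) (φ : ∀ m, ({i // i ∈ S m} → Fin 2) → ℂ)
    (T : Finset (Fin M)) : Submodule ℂ ((Fin N → Fin 2) → ℂ) :=
  T.inf fun m => LinearMap.ker (Pop (S m) (φ m))

lemma kerInf_antitone (S : Fin M → Finset (Fin N)) (φ : ∀ m, ({i // i ∈ S m} → Fin 2) → ℂ)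
    {T T' : Finset (Fin M)} (h : T ⊆ T') : kerInf S φ T' ≤ kerInf S φ T :=
  Finset.inf_mono h

lemma neighbor_count (hk : 0 < k) (S : Fin M → Finset (Fin N)) (hS : ∀ m, (S m).card = k)
    (hdeg : ∀ i : Fin N,
      ((Finset.univ.filter fun m : Fin M => i ∈ S m).card : ℝ) ≤ 2 ^ k / (Real.exp 1 * k))
    (m : Fin M) :
    (((Finset.univ.filter fun j : Fin M => ¬ Disjoint (S j) (S m)).card : ℝ)) ≤
      2 ^ k / Real.exp 1 := by
  classical
  have hsub : (Finset.univ.filter fun j : Fin M => ¬ Disjoint (S j) (S m)) ⊆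
      (S m).biUnion (fun i => Finset.univ.filter fun j : Fin M => i ∈ S j) := by
    intro j hj
    simp only [Finset.mem_filter, Finset.mem_univ, true_and] at hj
    obtain ⟨i, hi1, hi2⟩ := Finset.not_disjoint_iff.mp hj
    exact Finset.mem_biUnion.mpr ⟨i, hi2, by simp [hi1]⟩
  have h1 : ((Finset.univ.filter fun j : Fin M => ¬ Disjoint (S j) (S m)).card : ℝ) ≤
      (((S m).biUnion (fun i => Finset.univ.filter fun j : Fin M => i ∈ S j)).card : ℝ) := by
    exact_mod_cast Finset.card_le_card hsub
  have h2 : (((S m).biUnion (fun i => Finset.univ.filter fun j : Fin M => i ∈ S j)).card : ℝ) ≤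
      ∑ i ∈ S m, ((Finset.univ.filter fun j : Fin M => i ∈ S j).card : ℝ) := by
    exact_mod_cast Finset.card_biUnion_le
  have h3 : ∑ i ∈ S m, ((Finset.univ.filter fun j : Fin M => i ∈ S j).card : ℝ) ≤
      ∑ _i ∈ S m, (2:ℝ) ^ k / (Real.exp 1 * k) :=
    Finset.sum_le_sum (fun i _ => hdeg i)
  have h4 : ∑ _i ∈ S m, (2:ℝ) ^ k / (Real.exp 1 * k) = 2 ^ k / Real.exp 1 := by
    rw [Finset.sum_const, hS m, nsmul_eq_mul]
    have hk' : (k:ℝ) ≠ 0 := Nat.cast_ne_zero.mpr hk.ne'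
    have he : Real.exp 1 ≠ 0 := (Real.exp_pos 1).ne'
    field_simp
  linarith

/-- main relative-dimension claim, by strong induction -/
lemma main_claim (hk : 0 < k) (S : Fin M → Finset (Fin N)) (hS : ∀ m, (S m).card = k)
    (hdeg : ∀ i : Fin N,
      ((Finset.univ.filter fun m : Fin M => i ∈ S m).card : ℝ) ≤ 2 ^ k / (Real.exp 1 * k))
    (φ : ∀ m, ({i // i ∈ S m} → Fin 2) → ℂ)
    (hk2 : 2 ≤ k) (hek : Real.exp 1 * k ≤ 2 ^ k) :
    ∀ n : ℕ, ∀ T : Finset (Fin M), ∀ m : Fin M, T.card ≤ n →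
      (1 - Real.exp 1 / 2 ^ k) * (Module.finrank ℂ (kerInf S φ T) : ℝ) ≤
        (Module.finrank ℂ (kerInf S φ (insert m T)) : ℝ) := by
  classical
  set x : ℝ := Real.exp 1 / 2 ^ k with hxdef
  have h2k : (0:ℝ) < 2 ^ k := by positivity
  have hx0 : 0 < x := div_pos (Real.exp_pos 1) h2k
  have hx1 : x < 1 := by
    rw [hxdef, div_lt_one h2k]
    have h2 : Real.exp 1 * 2 ≤ Real.exp 1 * k := by
      apply mul_le_mul_of_nonneg_left _ (Real.exp_pos 1).le
      exact_mod_cast hk2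
    nlinarith [Real.exp_pos 1]
  intro n
  induction n using Nat.strong_induction_on with
  | _ n IH =>
  intro T m hTn
  by_cases hmT : m ∈ T
  · rw [Finset.insert_eq_self.mpr hmT]
    nlinarith [Nat.cast_nonneg (α := ℝ) (Module.finrank ℂ (kerInf S φ T))]
  -- split T
  set T₁ : Finset (Fin M) := T.filter (fun j => ¬ Disjoint (S j) (S m)) with hT₁
  set T₂ : Finset (Fin M) := T.filter (fun j => Disjoint (S j) (S m)) with hT₂
  have hunion : T₂ ∪ T₁ = T := Finset.filter_union_filter_not_eq _ T
  -- invariance of kerInf T₂ under the local operators of S m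
  have hinv : ∀ s t : {i // i ∈ S m} → Fin 2, ∀ v ∈ kerInf S φ T₂,
      Eop (S m) s t v ∈ kerInf S φ T₂ := by
    intro s t v hv
    rw [kerInf, Submodule.mem_finsetInf] at hv ⊢
    intro j hj
    have hdisj : Disjoint (S m) (S j) := by
      have := (Finset.mem_filter.mp hj).2
      exact this.symm
    exact ker_Pop_invariant hdisj (φ j) s t v (hv j hj)
  obtain ⟨r, hr1, hr2⟩ := tensor_dim_lemma (S m) (φ m) (kerInf S φ T₂) hinv
  have hcard : Fintype.card ({i // i ∈ S m} → Fin 2) = 2 ^ k := by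
    rw [Fintype.card_fun, Fintype.card_coe, hS m, Fintype.card_fin]
  rw [hcard] at hr1
  -- abbreviations (real dims)
  set a : ℝ := (Module.finrank ℂ (kerInf S φ (insert m T)) : ℝ) with ha
  set b : ℝ := (Module.finrank ℂ (kerInf S φ T) : ℝ) with hb
  set c : ℝ := (Module.finrank ℂ (kerInf S φ T₂) : ℝ) with hc
  set A' : ℝ := (Module.finrank ℂ
    ↥(kerInf S φ T₂ ⊓ LinearMap.ker (Pop (S m) (φ m))) : ℝ) with hA'
  -- (†) : A' + b ≤ c + a
  have hdagger : A' + b ≤ c + a := by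
    have hBle : kerInf S φ T ≤ kerInf S φ T₂ :=
      kerInf_antitone S φ (Finset.filter_subset _ _)
    have hAle : kerInf S φ T₂ ⊓ LinearMap.ker (Pop (S m) (φ m)) ≤ kerInf S φ T₂ := inf_le_left
    have hsup : (kerInf S φ T₂ ⊓ LinearMap.ker (Pop (S m) (φ m))) ⊔ kerInf S φ T ≤
        kerInf S φ T₂ := sup_le hAle hBle
    have heq := Submodule.finrank_sup_add_finrank_inf_eq
      (kerInf S φ T₂ ⊓ LinearMap.ker (Pop (S m) (φ m))) (kerInf S φ T)
    have hfs := Submodule.finrank_mono (R := ℂ) hsup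
    have hinf_eq : (kerInf S φ T₂ ⊓ LinearMap.ker (Pop (S m) (φ m))) ⊓ kerInf S φ T
        = kerInf S φ (insert m T) := by
      rw [inf_assoc, inf_comm (LinearMap.ker (Pop (S m) (φ m))) (kerInf S φ T),
        ← inf_assoc, inf_eq_right.mpr hBle]
      simp only [kerInf]
      rw [Finset.inf_insert]
      exact inf_comm _ _
    rw [hinf_eq] at heq
    have : Module.finrank ℂ ↥(kerInf S φ T₂ ⊓ LinearMap.ker (Pop (S m) (φ m)))
        + Module.finrank ℂ (kerInf S φ T) ≤
        Module.finrank ℂ (kerInf S φ T₂) + Module.finrank ℂ (kerInf S φ (insert m T)) := by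
      omega
    rw [hA', hb, hc, ha]
    exact_mod_cast this
  -- peeling: (1-x)^(T₁.card) * c ≤ b
  have hpeel : ∀ T₁' ⊆ T₁, (1 - x) ^ (T₁'.card) * c ≤
      (Module.finrank ℂ (kerInf S φ (T₂ ∪ T₁')) : ℝ) := by
    intro T₁'
    induction T₁' using Finset.induction_on with
    | empty =>
      intro _
      rw [Finset.card_empty, pow_zero, one_mul, Finset.union_empty, hc]
    | @insert j T₁'' hj ih =>
      intro hsub
      have hsub' : T₁'' ⊆ T₁ := (Finset.subset_insert j T₁'').trans hsub
      have hjT₁ : j ∈ T₁ := hsub (Finset.mem_insert_self j T₁'')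
      have hjT : j ∈ T := (Finset.filter_subset _ _) hjT₁
      have hjT₂ : j ∉ T₂ := by
        intro h
        have := (Finset.mem_filter.mp h).2
        exact (Finset.mem_filter.mp hjT₁).2 this
      have hjU : j ∉ T₂ ∪ T₁'' := by
        simp only [Finset.mem_union]
        rintro (h | h)
        · exact hjT₂ h
        · exact hj h
      have hUsub : T₂ ∪ T₁'' ⊆ T.erase j := by
        intro u hu
        rw [Finset.mem_erase]
        constructor
        · rintro rfl; exact hjU hu
        · rcases Finset.mem_union.mp hu with h | h
          · exact (Finset.filter_subset _ _) h
          · exact (Finset.filter_subset _ _) (hsub' h)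
      have hUcard : (T₂ ∪ T₁'').card < n := by
        have h1 : (T₂ ∪ T₁'').card ≤ (T.erase j).card := Finset.card_le_card hUsub
        have h2 : (T.erase j).card < T.card := Finset.card_erase_lt_of_mem hjT
        omega
      have hstep := IH (T₂ ∪ T₁'').card hUcard (T₂ ∪ T₁'') j le_rfl
      have hIH := ih hsub'
      rw [Finset.card_insert_of_notMem hj, Finset.union_insert]
      calc (1 - x) ^ (T₁''.card + 1) * c = (1 - x) * ((1 - x) ^ T₁''.card * c) := by ring
        _ ≤ (1 - x) * (Module.finrank ℂ (kerInf S φ (T₂ ∪ T₁'')) : ℝ) := by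
            apply mul_le_mul_of_nonneg_left hIH
            linarith
        _ ≤ (Module.finrank ℂ (kerInf S φ (insert j (T₂ ∪ T₁''))) : ℝ) := hstep
  have hpeelT : (1 - x) ^ (T₁.card) * c ≤ b := by
    have := hpeel T₁ le_rfl
    rw [hunion] at this
    exact this
  -- numeric bound
  have hp1 : ((T₁.card : ℝ)) + 1 ≤ 2 ^ k / Real.exp 1 := by
    have hsubΓ : insert m T₁ ⊆ Finset.univ.filter (fun j : Fin M => ¬ Disjoint (S j) (S m)) := by
      intro j hj
      rcases Finset.mem_insert.mp hj with rfl | hj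
      · simp only [Finset.mem_filter, Finset.mem_univ, true_and]
        rw [Finset.not_disjoint_iff]
        obtain ⟨i, hi⟩ := Finset.card_pos.mp (by rw [hS j]; exact hk)
        exact ⟨i, hi, hi⟩
      · simp only [Finset.mem_filter, Finset.mem_univ, true_and]
        exact (Finset.mem_filter.mp hj).2
    have hmnot : m ∉ T₁ := fun h => hmT ((Finset.filter_subset _ _) h)
    have h1 : T₁.card + 1 ≤ (Finset.univ.filter
        (fun j : Fin M => ¬ Disjoint (S j) (S m))).card := by
      have := Finset.card_le_card hsubΓ
      rwa [Finset.card_insert_of_notMem hmnot] at this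
    calc ((T₁.card : ℝ)) + 1 ≤ ((Finset.univ.filter
        (fun j : Fin M => ¬ Disjoint (S j) (S m))).card : ℝ) := by exact_mod_cast h1
      _ ≤ 2 ^ k / Real.exp 1 := neighbor_count hk S hS hdeg m
  have hnum : (1:ℝ) / 2 ^ k ≤ x * (1 - x) ^ (T₁.card) :=
    qlll_numeric k T₁.card hk2 hek hp1
  -- assemble
  have hr1R : c = 2 ^ k * (r : ℝ) := by rw [hc, hr1]; push_cast; ring
  have hr2R : c ≤ A' + (r : ℝ) := by rw [hc, hA']; exact_mod_cast hr2
  have hr0 : (0:ℝ) ≤ (r : ℝ) := Nat.cast_nonneg r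
  have hb0 : (0:ℝ) ≤ b := Nat.cast_nonneg _
  -- r ≤ x * b
  have hrxb : (r : ℝ) ≤ x * b := by
    have e1 : 1 ≤ x * (1 - x) ^ (T₁.card) * 2 ^ k := by
      have := mul_le_mul_of_nonneg_right hnum h2k.le
      rwa [one_div, inv_mul_cancel₀ (ne_of_gt h2k)] at this
    have e2 : x * ((1 - x) ^ (T₁.card) * c) ≤ x * b := mul_le_mul_of_nonneg_left hpeelT hx0.le
    calc (r : ℝ) = 1 * r := (one_mul _).symm
      _ ≤ (x * (1 - x) ^ (T₁.card) * 2 ^ k) * r := mul_le_mul_of_nonneg_right e1 hr0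
      _ = x * ((1 - x) ^ (T₁.card) * (2 ^ k * r)) := by ring
      _ = x * ((1 - x) ^ (T₁.card) * c) := by rw [← hr1R]
      _ ≤ x * b := e2
  -- final chain : a ≥ A' + b - c ≥ (c - r) + b - c = b - r ≥ b - x b = (1-x) b
  linarith
end Main


lemma lower_bound (hk : 0 < k) (S : Fin M → Finset (Fin N)) (hS : ∀ m, (S m).card = k)
    (hdeg : ∀ i : Fin N,
      ((Finset.univ.filter fun m : Fin M => i ∈ S m).card : ℝ) ≤ 2 ^ k / (Real.exp 1 * k))
    (φ : ∀ m, ({i // i ∈ S m} → Fin 2) → ℂ)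
    (hk2 : 2 ≤ k) (hek : Real.exp 1 * k ≤ 2 ^ k) :
    ∀ n : ℕ, ∀ T : Finset (Fin M), T.card = n →
      (1 - Real.exp 1 / 2 ^ k) ^ n * 2 ^ N ≤
        (Module.finrank ℂ (kerInf S φ T) : ℝ) := by
  have hambient : Module.finrank ℂ ((Fin N → Fin 2) → ℂ) = 2 ^ N := by
    rw [Module.finrank_pi ℂ, Fintype.card_fun, Fintype.card_fin, Fintype.card_fin]
  intro n
  induction n with
  | zero =>
    intro T hT
    rw [Finset.card_eq_zero.mp hT]
    rw [kerInf, Finset.inf_empty]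
    rw [pow_zero, one_mul, finrank_top, hambient]
    norm_num
  | succ n ih =>
    intro T hT
    have hne : T.Nonempty := Finset.card_pos.mp (by omega)
    obtain ⟨m, hm⟩ := hne
    have herase : T = insert m (T.erase m) := (Finset.insert_erase hm).symm
    have hcard : (T.erase m).card = n := by
      rw [Finset.card_erase_of_mem hm, hT]; omega
    have h1 := ih (T.erase m) hcard
    have h2 := main_claim hk S hS hdeg φ hk2 hek n (T.erase m) m (le_of_eq hcard)
    have h1x : (0:ℝ) ≤ 1 - Real.exp 1 / 2 ^ k := by
      have h2k : (0:ℝ) < 2 ^ k := by positivity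
      have h2e : Real.exp 1 * 2 ≤ 2 ^ k := by
        calc Real.exp 1 * 2 ≤ Real.exp 1 * k := by
              apply mul_le_mul_of_nonneg_left _ (Real.exp_pos 1).le
              exact_mod_cast hk2
          _ ≤ 2 ^ k := hek
      rw [sub_nonneg, div_le_one h2k]
      nlinarith [Real.exp_pos 1]
    calc (1 - Real.exp 1 / 2 ^ k) ^ (n+1) * 2 ^ N
        = (1 - Real.exp 1 / 2 ^ k) * ((1 - Real.exp 1 / 2 ^ k) ^ n * 2 ^ N) := by ring
      _ ≤ (1 - Real.exp 1 / 2 ^ k) *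
            (Module.finrank ℂ (kerInf S φ (T.erase m)) : ℝ) :=
          mul_le_mul_of_nonneg_left h1 h1x
      _ ≤ (Module.finrank ℂ (kerInf S φ (insert m (T.erase m))) : ℝ) := h2
      _ = (Module.finrank ℂ (kerInf S φ T) : ℝ) := by rw [← herase]

lemma Pop_apply_eq_mulVec (S : Finset (Fin N)) (φ : ({i // i ∈ S} → Fin 2) → ℂ)
    (x : (Fin N → Fin 2) → ℂ) (σ : Fin N → Fin 2) :
    Matrix.mulVecLin (clauseProj S φ) x σ =
      φ (res S σ) * ∑ t : {i // i ∈ S} → Fin 2,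
        (starRingEnd ℂ) (φ t) * x (ovr S σ t) := by
  classical
  have : Matrix.mulVecLin (clauseProj S φ) x σ = ∑ τ, clauseProj S φ σ τ * x τ := by
    simp [Matrix.mulVecLin, Matrix.mulVec, dotProduct]
  rw [this]
  have hsum : ∑ τ : Fin N → Fin 2, clauseProj S φ σ τ * x τ
      = ∑ τ ∈ Finset.univ.filter (fun τ => ∀ i ∉ S, σ i = τ i), clauseProj S φ σ τ * x τ := by
    refine (Finset.sum_subset (Finset.filter_subset _ _) ?_).symm
    intro τ _ hτ
    simp only [Finset.mem_filter, Finset.mem_univ, true_and, not_forall] at hτ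
    simp only [clauseProj]
    rw [if_neg]
    · ring
    · push_neg at hτ ⊢; obtain ⟨i,hi,h⟩ := hτ; exact ⟨i,hi,h⟩
  rw [hsum, Finset.mul_sum]
  refine Finset.sum_bij' (fun τ _ => res S τ) (fun t _ => ovr S σ t) ?_ ?_ ?_ ?_ ?_
  · intros; exact Finset.mem_univ _
  · intro t _
    simp only [Finset.mem_filter, Finset.mem_univ, true_and]
    intro i hi
    simp [ovr, hi]
  · intro τ hτ
    simp only [Finset.mem_filter, Finset.mem_univ, true_and] at hτ
    funext i
    simp only [ovr, res]
    split
    · rfl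
    · exact hτ i ‹_›
  · intro t _; exact res_ovr S σ t
  · intro τ hτ
    simp only [Finset.mem_filter, Finset.mem_univ, true_and] at hτ
    simp only [clauseProj]
    rw [if_pos]
    · have h1 : res S σ = fun i : {i // i ∈ S} => σ i.1 := rfl
      have h2 : (fun i : {i // i ∈ S} => τ i.1) = res S τ := rfl
      have h3 : ovr S σ (res S τ) = τ := by
        funext i
        simp only [ovr, res]
        split
        · rfl
        · exact hτ i ‹_›
      rw [h2, h3, ← h1]
      ring
    · exact hτ


/-- **Quantum Lovász local lemma for bounded-degree `k`-QSAT.**  If every qubit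
appears in at most `2^k / (e k)` clauses, then for every choice of (unit) clause
vectors the Hamiltonian has a nontrivial zero-energy subspace. -/
theorem quantum_lovasz_local_lemma (N M k : ℕ) (hk : 0 < k)
    (S : Fin M → Finset (Fin N)) (hS : ∀ m, (S m).card = k)
    (hdeg : ∀ i : Fin N,
      ((Finset.univ.filter fun m : Fin M => i ∈ S m).card : ℝ) ≤
        2 ^ k / (Real.exp 1 * k)) :
    ∀ φ : ∀ m, ({i // i ∈ S m} → Fin 2) → ℂ, (∀ m, IsUnitVec (φ m)) →
      1 ≤ kerDim S φ := by
  intro φ _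
  classical
  have hbridge : ∀ m, Matrix.mulVecLin (clauseProj (S m) (φ m)) = Pop (S m) (φ m) := by
    intro m
    apply LinearMap.ext; intro x
    funext σ
    rw [Pop_apply_eq_mulVec, Pop_apply']
  have hVle : kerInf S φ Finset.univ ≤
      LinearMap.ker (Matrix.mulVecLin (qsatHam S φ)) := by
    intro v hv
    rw [LinearMap.mem_ker]
    have hsum : Matrix.mulVecLin (qsatHam S φ) v =
        ∑ m, Matrix.mulVecLin (clauseProj (S m) (φ m)) v := by
      funext σ
      have h1 : Matrix.mulVecLin (qsatHam S φ) v σ = ∑ τ, qsatHam S φ σ τ * v τ := by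
        simp [Matrix.mulVecLin, Matrix.mulVec, dotProduct]
      have h2 : ∀ m : Fin M, Matrix.mulVecLin (clauseProj (S m) (φ m)) v σ
          = ∑ τ, clauseProj (S m) (φ m) σ τ * v τ := by
        intro m
        simp [Matrix.mulVecLin, Matrix.mulVec, dotProduct]
      rw [h1, Finset.sum_apply]
      rw [Finset.sum_congr rfl (fun τ _ => by
        rw [qsatHam, Matrix.sum_apply, Finset.sum_mul] :
          ∀ τ ∈ Finset.univ, qsatHam S φ σ τ * v τ
            = ∑ m, clauseProj (S m) (φ m) σ τ * v τ)]
      rw [Finset.sum_comm]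
      exact Finset.sum_congr rfl (fun m _ => (h2 m).symm)
    rw [hsum]
    refine Finset.sum_eq_zero (fun m _ => ?_)
    rw [hbridge m]
    have := Submodule.mem_finsetInf.mp hv m (Finset.mem_univ m)
    exact LinearMap.mem_ker.mp this
  have hone : 1 ≤ Module.finrank ℂ (kerInf S φ Finset.univ) := by
    rcases Nat.eq_zero_or_pos M with hM | hM
    · subst hM
      rw [show (Finset.univ : Finset (Fin 0)) = ∅ from rfl, kerInf, Finset.inf_empty,
        finrank_top, Module.finrank_pi ℂ, Fintype.card_fun, Fintype.card_fin, Fintype.card_fin]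
      exact Nat.one_le_two_pow
    · -- derive numeric side conditions
      set m₀ : Fin M := ⟨0, hM⟩ with hm₀
      obtain ⟨i, hi⟩ := Finset.card_pos.mp (by rw [hS m₀]; exact hk)
      have h1 : m₀ ∈ Finset.univ.filter (fun m : Fin M => i ∈ S m) := by simp [hi]
      have h2 : (1:ℝ) ≤ ((Finset.univ.filter fun m : Fin M => i ∈ S m).card : ℝ) := by
        exact_mod_cast Finset.card_pos.mpr ⟨m₀, h1⟩
      have hek0 : (0:ℝ) < Real.exp 1 * k := by
        have : (0:ℝ) < (k:ℝ) := by exact_mod_cast hk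
        positivity
      have hek : Real.exp 1 * k ≤ 2 ^ k :=
        (one_le_div hek0).mp (le_trans h2 (hdeg i))
      have hk2 : 2 ≤ k := by
        by_contra h
        push_neg at h
        interval_cases k
        · have h3 : (2:ℝ) < Real.exp 1 := by
            have := Real.add_one_lt_exp (one_ne_zero (α := ℝ))
            linarith
          norm_num at hek
          linarith
      have hlb := lower_bound hk S hS hdeg φ hk2 hek (Finset.univ : Finset (Fin M)).card Finset.univ rfl
      have h2k : (0:ℝ) < 2 ^ k := by positivity
      have h2e : Real.exp 1 * 2 ≤ 2 ^ k := by
        calc Real.exp 1 * 2 ≤ Real.exp 1 * k := by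
              apply mul_le_mul_of_nonneg_left _ (Real.exp_pos 1).le
              exact_mod_cast hk2
          _ ≤ 2 ^ k := hek
      have h1x : (0:ℝ) < 1 - Real.exp 1 / 2 ^ k := by
        rw [sub_pos, div_lt_one h2k]
        nlinarith [Real.exp_pos 1]
      have hpos : (0:ℝ) < (1 - Real.exp 1 / 2 ^ k) ^ (Finset.univ : Finset (Fin M)).card * 2 ^ N :=
        mul_pos (pow_pos h1x _) (by positivity)
      have : (0:ℝ) < (Module.finrank ℂ (kerInf S φ Finset.univ) : ℝ) :=
        lt_of_lt_of_le hpos hlb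
      have hpos' : 0 < Module.finrank ℂ (kerInf S φ Finset.univ) := by
        by_contra h0
        push_neg at h0
        interval_cases (Module.finrank ℂ (kerInf S φ Finset.univ))
        norm_num at this
      exact hpos'
  calc 1 ≤ Module.finrank ℂ (kerInf S φ Finset.univ) := hone
    _ ≤ kerDim S φ := Submodule.finrank_mono hVle

end
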